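/- Under the multi-logger setting with δ ∈ [0, L] and d_2(h||h_avg) ≤ d_∞(h||h_avg) = M_avg, for any η > 0, with probability at least 1 − η: R(h) ≤ R̂_bal(h) + (2 L M_avg log(1/η))/(3n) + L √((2 d_2(h||h_avg; P) log(1/η))/n). -/

import Mathlib

open MeasureTheory ProbabilityTheory Real Nat
open scoped ENNReal NNReal


private lemma fact_ge (k : ℕ) : (2:ℝ) * 3 ^ k ≤ (k+2)! := by
  induction k with
  | zero => norm_num [Nat.factorial]
  | succ k ih =>
    have h : ((k+3)! : ℝ) = (k+3) * (k+2)! := by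
      have : (k+3)! = (k+3) * (k+2)! := Nat.factorial_succ (k+2)
      exact_mod_cast congrArg (Nat.cast : ℕ → ℝ) this
    have h2 : (0:ℝ) ≤ (k:ℝ) := Nat.cast_nonneg k
    show (2:ℝ) * 3 ^ (k+1) ≤ ((k+1+2)! : ℝ)
    have : (k+1+2) = (k+3) := by ring
    rw [this, h, pow_succ]
    nlinarith [ih]

private lemma exp_le_quad_pos {y : ℝ} (hy0 : 0 ≤ y) (hy3 : y < 3) :
    Real.exp y ≤ 1 + y + y^2 * (1/(2*(1-y/3))) := by
  have hsum : Real.exp y = ∑' n : ℕ, y ^ n / n ! := by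
    rw [Real.exp_eq_exp_ℝ, NormedSpace.exp_eq_tsum_div]
  have hS : Summable (fun n : ℕ => y ^ n / n !) := Real.summable_pow_div_factorial y
  have hS2 : Summable (fun n : ℕ => y ^ (n+2) / (n+2)!) := (summable_nat_add_iff 2).mpr hS
  have hr0 : (0:ℝ) ≤ y/3 := by linarith
  have hr1 : y/3 < 1 := by linarith
  have hgeo : Summable (fun n : ℕ => y^2/2 * (y/3)^n) :=
    (summable_geometric_of_lt_one hr0 hr1).mul_left _
  have hsplit : ∑' n : ℕ, y^n/n ! = (∑ i ∈ Finset.range 2, y^i/(i)!) + ∑' n : ℕ, y^(n+2)/(n+2)! :=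
    (Summable.sum_add_tsum_nat_add 2 hS).symm
  have hterm : ∀ n : ℕ, y^(n+2)/(n+2)! ≤ y^2/2 * (y/3)^n := by
    intro n
    have hf := fact_ge n
    have h1 : y^(n+2) = y^2 * y^n := by rw [pow_add]; ring
    rw [h1, div_pow]
    have h2 : y^2/2 * (y^n/3^n) = y^2 * y^n / (2 * 3^n) := by
      field_simp
    rw [h2]
    apply div_le_div_of_nonneg_left (by positivity) (by positivity) hf
  have htail : ∑' n : ℕ, y^(n+2)/(n+2)! ≤ y^2/2 * (1 - y/3)⁻¹ := by
    calc ∑' n : ℕ, y^(n+2)/(n+2)! ≤ ∑' n : ℕ, y^2/2 * (y/3)^n :=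
          Summable.tsum_le_tsum hterm hS2 hgeo
      _ = y^2/2 * ∑' n : ℕ, (y/3)^n := tsum_mul_left
      _ = y^2/2 * (1 - y/3)⁻¹ := by rw [tsum_geometric_of_lt_one hr0 hr1]
  have hrange : (∑ i ∈ Finset.range 2, y^i/(i)!) = 1 + y := by
    simp [Finset.sum_range_succ, Nat.factorial]
  have hfinal : y^2/2 * (1 - y/3)⁻¹ = y^2 * (1/(2*(1-y/3))) := by
    rw [one_div, mul_inv]
    ring
  rw [hsum, hsplit, hrange, ← hfinal]
  linarith [htail]

private lemma exp_le_quad_neg {y : ℝ} (hy : y ≤ 0) : Real.exp y ≤ 1 + y + y^2/2 := by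
  set f : ℝ → ℝ := fun t => 1 + t + t^2/2 - Real.exp t with hf
  have hderiv : ∀ t : ℝ, HasDerivAt f (1 + t - Real.exp t) t := by
    intro t
    have h1 : HasDerivAt (fun t : ℝ => 1 + t) 1 t := (hasDerivAt_id t).const_add 1
    have h2 : HasDerivAt (fun t : ℝ => t^2/2) t t := by
      simpa using (hasDerivAt_pow 2 t).div_const 2
    exact ((h1.add h2).sub (Real.hasDerivAt_exp t))
  have hmono : AntitoneOn f (Set.Iic 0) := by
    apply antitoneOn_of_deriv_nonpos (convex_Iic 0)
    · exact (((continuous_const.add continuous_id).add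
        ((continuous_pow 2).div_const 2)).sub Real.continuous_exp).continuousOn
    · intro x hx
      exact (hderiv x).differentiableAt.differentiableWithinAt
    · intro x hx
      rw [(hderiv x).deriv]
      linarith [Real.add_one_le_exp x]
  have h0 : f 0 ≤ f y := hmono (Set.mem_Iic.2 hy) (Set.mem_Iic.2 le_rfl) hy
  have : f 0 = 0 := by simp [hf]
  rw [this] at h0
  simp only [hf] at h0
  linarith

private lemma exp_le_quad {y u : ℝ} (hyu : y ≤ u) (hu0 : 0 ≤ u) (hu3 : u < 3) :
    Real.exp y ≤ 1 + y + y^2 * (1/(2*(1-u/3))) := by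
  have hden : 0 < 1 - u/3 := by linarith
  have hg : (1:ℝ)/2 ≤ 1/(2*(1-u/3)) := by
    apply one_div_le_one_div_of_le (by linarith) (by linarith)
  rcases le_or_gt y 0 with hy | hy
  · have h1 := exp_le_quad_neg hy
    nlinarith [sq_nonneg y]
  · have h1 := exp_le_quad_pos hy.le (lt_of_le_of_lt hyu hu3)
    have hden2 : 0 < 1 - y/3 := by linarith [lt_of_le_of_lt hyu hu3]
    have h2 : 1/(2*(1-y/3)) ≤ 1/(2*(1-u/3)) := by
      apply one_div_le_one_div_of_le (by linarith) (by linarith)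
    nlinarith [sq_nonneg y]

private lemma integrable_of_bdd {α : Type*} [MeasurableSpace α] {κ : Measure α}
    [IsFiniteMeasure κ] {f : α → ℝ} (hf : AEStronglyMeasurable f κ) {C : ℝ}
    (hC : ∀ a, ‖f a‖ ≤ C) : Integrable f κ :=
  (integrable_const C).mono' hf (Filter.Eventually.of_forall hC)

private lemma bern_mgf {α : Type*} [MeasurableSpace α] (κ : Measure α) [IsProbabilityMeasure κ]
    (W : α → ℝ) (hWm : Measurable W) (b lam m : ℝ)
    (hWb : ∀ a, W a ∈ Set.Icc 0 b) (hm : m = ∫ a, W a ∂κ)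
    (hlam : 0 ≤ lam) (hb : 0 ≤ b) (hlb : lam * b < 3) :
    ∫ a, Real.exp (lam * (m - W a)) ∂κ
      ≤ Real.exp (lam^2 * (∫ a, (W a)^2 ∂κ) * (1/(2*(1 - lam*b/3)))) := by
  have hWint : Integrable W κ := by
    apply integrable_of_bdd hWm.aestronglyMeasurable (C := b)
    intro a
    rw [Real.norm_eq_abs, abs_of_nonneg (hWb a).1]
    exact (hWb a).2
  have hW2int : Integrable (fun a => (W a)^2) κ := by
    apply integrable_of_bdd (hWm.pow_const 2).aestronglyMeasurable (C := b^2)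
    intro a
    rw [Real.norm_eq_abs, abs_of_nonneg (sq_nonneg _)]
    exact pow_le_pow_left₀ (hWb a).1 (hWb a).2 2
  have hm0 : 0 ≤ m := hm ▸ integral_nonneg (fun a => (hWb a).1)
  have hmb : m ≤ b := by
    rw [hm]
    calc ∫ a, W a ∂κ ≤ ∫ _, b ∂κ := integral_mono hWint (integrable_const b) fun a => (hWb a).2
      _ = b := by simp
  set G := 1/(2*(1 - lam*b/3)) with hGdef
  have hden : 0 < 1 - lam*b/3 := by linarith
  have hG0 : 0 ≤ G := by positivity
  have hpt : ∀ a, Real.exp (lam * (m - W a)) ≤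
      1 + lam*(m - W a) + (lam*(m - W a))^2 * G := by
    intro a
    apply exp_le_quad _ (mul_nonneg hlam hb) hlb
    have h1 : m - W a ≤ b := by linarith [(hWb a).1]
    exact mul_le_mul_of_nonneg_left h1 hlam
  have hLint : Integrable (fun a => Real.exp (lam * (m - W a))) κ := by
    apply integrable_of_bdd (C := Real.exp (lam * b))
    · exact (((measurable_const.sub hWm).const_mul lam).exp).aestronglyMeasurable
    · intro a
      rw [Real.norm_eq_abs, abs_of_pos (Real.exp_pos _)]
      apply Real.exp_le_exp.2
      have h1 : m - W a ≤ b := by linarith [(hWb a).1]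
      exact mul_le_mul_of_nonneg_left h1 hlam
  have hRint : Integrable (fun a => 1 + lam*(m - W a) + (lam*(m - W a))^2 * G) κ := by
    have h1 : Integrable (fun a => (1 + lam*m + lam^2*m^2*G)
        + ((-lam - 2*lam^2*m*G)*W a + (lam^2*G)*(W a)^2)) κ :=
      (integrable_const _).add ((hWint.const_mul _).add (hW2int.const_mul _))
    apply h1.congr
    filter_upwards with a
    ring
  calc ∫ a, Real.exp (lam * (m - W a)) ∂κ
      ≤ ∫ a, (1 + lam*(m - W a) + (lam*(m - W a))^2 * G) ∂κ :=
        integral_mono hLint hRint hpt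
    _ = (1 + lam*m + lam^2*m^2*G) + ((-lam - 2*lam^2*m*G) * (∫ a, W a ∂κ)
        + (lam^2*G) * (∫ a, (W a)^2 ∂κ)) := by
        rw [show (fun a => 1 + lam*(m - W a) + (lam*(m - W a))^2 * G)
            = fun a => (1 + lam*m + lam^2*m^2*G)
              + ((-lam - 2*lam^2*m*G)*W a + (lam^2*G)*(W a)^2) from funext fun a => by ring]
        have e2 : Integrable (fun a => (-lam - 2*lam^2*m*G)*W a + (lam^2*G)*(W a)^2) κ :=
          (hWint.const_mul _).add (hW2int.const_mul _)
        have e3 : Integrable (fun a => (-lam - 2*lam^2*m*G)*W a) κ := hWint.const_mul _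
        have e4 : Integrable (fun a => (lam^2*G)*(W a)^2) κ := hW2int.const_mul _
        rw [integral_add (integrable_const _) e2, integral_add e3 e4,
          MeasureTheory.integral_const_mul, MeasureTheory.integral_const_mul, integral_const]
        simp
    _ = 1 + lam^2 * G * ((∫ a, (W a)^2 ∂κ) - m^2) := by rw [← hm]; ring
    _ ≤ 1 + lam^2 * (∫ a, (W a)^2 ∂κ) * G := by
        nlinarith [sq_nonneg m, sq_nonneg lam, mul_nonneg (mul_nonneg (sq_nonneg lam) hG0) (sq_nonneg m)]
    _ ≤ Real.exp (lam^2 * (∫ a, (W a)^2 ∂κ) * G) := by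
        linarith [Real.add_one_le_exp (lam^2 * (∫ a, (W a)^2 ∂κ) * G)]

set_option maxHeartbeats 2000000 in
theorem balanced_generalization_bound {X Y Ω : Type*} [MeasurableSpace X]
    [MeasurableSpace Y] [MeasurableSpace Ω]
    (μ : Measure X) (ν : Measure Y) [SigmaFinite μ] [SigmaFinite ν]
    (μΩ : Measure Ω) [IsProbabilityMeasure μΩ]
    (J : ℕ) (nvec : Fin J → ℕ) (hn : 0 < ∑ j, nvec j)
    (Z : (j : Fin J) → Fin (nvec j) → Ω → X × Y)
    (Pd : X → ℝ) (h : X → Y → ℝ) (hj : Fin J → X → Y → ℝ) (havg : X → Y → ℝ)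
    (δ : X × Y → ℝ) (L : ℝ) (Mavg : ℝ) (η : ℝ) (hη : 0 < η)
    (havg_def : ∀ x y, havg x y = (∑ j, (nvec j : ℝ) * hj j x y) / (∑ j, (nvec j : ℝ)))
    (hP_nonneg : ∀ x, 0 ≤ Pd x) (hP_density : ∫ x, Pd x ∂μ = 1) (hP_meas : Measurable Pd)
    (hh_nonneg : ∀ x y, 0 ≤ h x y) (hh_density : ∀ x, ∫ y, h x y ∂ν = 1)
    (hh_meas : Measurable fun z : X × Y => h z.1 z.2)
    (hj_pos : ∀ j x y, 0 < hj j x y) (hj_density : ∀ j x, ∫ y, hj j x y ∂ν = 1)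
    (hj_meas : ∀ j, Measurable fun z : X × Y => hj j z.1 z.2)
    (hδ : ∀ z, δ z ∈ Set.Icc (0 : ℝ) L) (hδ_meas : Measurable δ)
    (hMavg : ∀ x y, h x y / havg x y ≤ Mavg)
    (hZ_meas : ∀ j i, Measurable (Z j i))
    (hlaw : ∀ j i, Measure.map (Z j i) μΩ
      = (μ.prod ν).withDensity fun z => ENNReal.ofReal (hj j z.1 z.2 * Pd z.1))
    (hind : iIndepFun
      (fun p : (j : Fin J) × Fin (nvec j) => Z p.1 p.2) μΩ)
    (hd2_int : Integrable
      (fun z : X × Y => (h z.1 z.2) ^ 2 / havg z.1 z.2 * Pd z.1) (μ.prod ν))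
    (hR_int : Integrable (fun z : X × Y => δ z * h z.1 z.2 * Pd z.1) (μ.prod ν)) :
    μΩ {ω | ∫ z : X × Y, δ z * h z.1 z.2 * Pd z.1 ∂(μ.prod ν)
        ≤ (1 / (∑ j, (nvec j : ℝ))) * (∑ j,
            ∑ i, h (Z j i ω).1 (Z j i ω).2 / havg (Z j i ω).1 (Z j i ω).2 * δ (Z j i ω))
          + 2 * L * Mavg * Real.log (1 / η) / (3 * ∑ j, (nvec j : ℝ))
          + L * Real.sqrt (2 *
              (∫ z : X × Y, (h z.1 z.2) ^ 2 / havg z.1 z.2 * Pd z.1 ∂(μ.prod ν))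
              * Real.log (1 / η) / (∑ j, (nvec j : ℝ)))}
      ≥ ENNReal.ofReal (1 - η) := by
  classical
  rw [ge_iff_le]
  rcases le_or_gt 1 η with hη1 | hη1
  · rw [show ENNReal.ofReal (1 - η) = 0 by rw [ENNReal.ofReal_eq_zero]; linarith]
    exact _root_.zero_le
  set n : ℝ := ∑ j, (nvec j : ℝ) with hndef
  have hn' : (0:ℝ) < n := by rw [hndef]; exact_mod_cast hn
  set s : ℝ := Real.log (1/η) with hsdef
  have hs : 0 < s := Real.log_pos (by rw [lt_div_iff₀ hη]; linarith)
  set R : ℝ := ∫ z : X × Y, δ z * h z.1 z.2 * Pd z.1 ∂(μ.prod ν) with hRdef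
  set d2 : ℝ := ∫ z : X × Y, (h z.1 z.2) ^ 2 / havg z.1 z.2 * Pd z.1 ∂(μ.prod ν) with hd2def
  clear_value n s R d2
  -- nonemptiness
  have hXne : Nonempty X := by
    by_contra hX
    rw [not_nonempty_iff] at hX
    rw [integral_of_isEmpty] at hP_density
    norm_num at hP_density
  obtain ⟨x₀⟩ := hXne
  have hYne : Nonempty Y := by
    by_contra hY
    rw [not_nonempty_iff] at hY
    have := hh_density x₀
    rw [integral_of_isEmpty] at this
    norm_num at this
  obtain ⟨y₀⟩ := hYne
  have hL0 : 0 ≤ L := le_trans (hδ (x₀, y₀)).1 (hδ (x₀, y₀)).2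
  -- havg positivity
  have havg_pos : ∀ x y, 0 < havg x y := by
    intro x y
    rw [havg_def]
    apply div_pos _ hn'
    obtain ⟨j0, hj0⟩ : ∃ j, 0 < nvec j := by
      by_contra hcon
      push_neg at hcon
      simp only [Nat.le_zero] at hcon
      rw [Finset.sum_eq_zero (fun j _ => hcon j)] at hn
      exact lt_irrefl 0 hn
    apply Finset.sum_pos' (fun j _ => mul_nonneg (Nat.cast_nonneg _) (hj_pos j x y).le)
    exact ⟨j0, Finset.mem_univ _, mul_pos (by exact_mod_cast hj0) (hj_pos j0 x y)⟩
  have hM0 : 0 ≤ Mavg :=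
    le_trans (div_nonneg (hh_nonneg x₀ y₀) (havg_pos x₀ y₀).le) (hMavg x₀ y₀)
  -- degenerate cases
  by_cases hdeg : L = 0 ∨ d2 = 0
  · have hR0 : R = 0 := by
      rcases hdeg with hL' | hd2'
      · rw [hRdef]
        rw [show (fun z : X × Y => δ z * h z.1 z.2 * Pd z.1) = fun _ => (0:ℝ) from
          funext fun z => by
            rw [le_antisymm (hL' ▸ (hδ z).2) (hδ z).1]; ring]
        exact integral_zero _ _
      · have hnn : (0 : (X × Y) → ℝ)
            ≤ fun z : X × Y => (h z.1 z.2) ^ 2 / havg z.1 z.2 * Pd z.1 := by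
          intro z
          exact mul_nonneg (div_nonneg (sq_nonneg _) (havg_pos z.1 z.2).le) (hP_nonneg _)
        have hae := (integral_eq_zero_iff_of_nonneg hnn hd2_int).1 (hd2def ▸ hd2')
        rw [hRdef]
        apply integral_eq_zero_of_ae
        filter_upwards [hae] with z hz
        simp only [Pi.zero_apply] at hz ⊢
        rcases mul_eq_zero.1 hz with h1 | h1
        · rcases div_eq_zero_iff.1 h1 with h2 | h2
          · rw [pow_eq_zero_iff (two_ne_zero)] at h2
            rw [h2]; ring
          · exact absurd h2 (havg_pos z.1 z.2).ne'
        · rw [h1]; ring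
    have hmem : ∀ ω : Ω, R ≤ (1/n) * (∑ j, ∑ i, h (Z j i ω).1 (Z j i ω).2 /
          havg (Z j i ω).1 (Z j i ω).2 * δ (Z j i ω))
        + 2 * L * Mavg * s / (3 * n) + L * Real.sqrt (2 * d2 * s / n) := by
      intro ω
      rw [hR0]
      have h1 : 0 ≤ (1/n) * ∑ j, ∑ i, h (Z j i ω).1 (Z j i ω).2 /
          havg (Z j i ω).1 (Z j i ω).2 * δ (Z j i ω) := by
        apply mul_nonneg (one_div_nonneg.2 hn'.le)
        apply Finset.sum_nonneg; intro j _
        apply Finset.sum_nonneg; intro i _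
        exact mul_nonneg (div_nonneg (hh_nonneg _ _) (havg_pos _ _).le) (hδ _).1
      have h2 : 0 ≤ 2 * L * Mavg * s / (3 * n) :=
        div_nonneg (mul_nonneg (mul_nonneg (by linarith) hM0) hs.le) (by linarith)
      have h3 : 0 ≤ L * Real.sqrt (2 * d2 * s / n) := mul_nonneg hL0 (Real.sqrt_nonneg _)
      linarith
    calc ENNReal.ofReal (1 - η) ≤ ENNReal.ofReal 1 := ENNReal.ofReal_le_ofReal (by linarith)
      _ = 1 := ENNReal.ofReal_one
      _ = μΩ Set.univ := measure_univ.symm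
      _ ≤ _ := measure_mono fun ω _ => hmem ω
  -- main case
  push_neg at hdeg
  obtain ⟨hLne, hd2ne⟩ := hdeg
  have hL : 0 < L := hL0.lt_of_ne (Ne.symm hLne)
  have hd2_0 : 0 ≤ d2 := by
    rw [hd2def]
    exact integral_nonneg fun z =>
      mul_nonneg (div_nonneg (sq_nonneg _) (havg_pos z.1 z.2).le) (hP_nonneg _)
  have hd2 : 0 < d2 := hd2_0.lt_of_ne (Ne.symm hd2ne)
  have hM : 0 < Mavg := by
    rcases hM0.eq_or_lt with hM' | hM'
    · exfalso
      have hzero : ∀ y, h x₀ y = 0 := by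
        intro y
        have h1 := hMavg x₀ y
        have h2 := div_nonneg (hh_nonneg x₀ y) (havg_pos x₀ y).le
        have h3 : h x₀ y / havg x₀ y = 0 := le_antisymm (hM' ▸ h1) h2
        rcases div_eq_zero_iff.1 h3 with h4 | h4
        · exact h4
        · exact absurd h4 (havg_pos x₀ y).ne'
      have := hh_density x₀
      rw [show (fun y => h x₀ y) = fun _ => (0:ℝ) from funext hzero] at this
      rw [integral_zero] at this
      norm_num at this
    · exact hM'
  -- the weight function W
  set W : X × Y → ℝ := fun z => h z.1 z.2 / havg z.1 z.2 * δ z with hWdef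
  have havg_meas : Measurable fun z : X × Y => havg z.1 z.2 := by
    rw [show (fun z : X × Y => havg z.1 z.2)
        = fun z => (∑ j, (nvec j : ℝ) * hj j z.1 z.2) / n from
      funext fun z => havg_def z.1 z.2]
    exact (Finset.measurable_sum _ fun j _ => (hj_meas j).const_mul _).div_const _
  have hW_meas : Measurable W := (hh_meas.div havg_meas).mul hδ_meas
  set b : ℝ := L * Mavg with hbdef
  have hb0 : 0 < b := by rw [hbdef]; exact mul_pos hL hM
  clear_value b
  have hWb : ∀ z, W z ∈ Set.Icc 0 b := by
    intro z
    constructor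
    · exact mul_nonneg (div_nonneg (hh_nonneg _ _) (havg_pos _ _).le) (hδ z).1
    · calc W z ≤ Mavg * δ z := mul_le_mul_of_nonneg_right (hMavg _ _) (hδ z).1
        _ ≤ Mavg * L := mul_le_mul_of_nonneg_left (hδ z).2 hM0
        _ = b := by rw [hbdef]; ring
  have hWnorm : ∀ z, ‖W z‖ ≤ b := fun z => by
    rw [Real.norm_eq_abs, abs_of_nonneg (hWb z).1]; exact (hWb z).2
  -- densities
  set g : Fin J → X × Y → ℝ := fun j z => hj j z.1 z.2 * Pd z.1 with hgdef
  have hg_meas : ∀ j, Measurable (g j) := fun j => (hj_meas j).mul (hP_meas.comp measurable_fst)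
  have hg_nonneg : ∀ j z, 0 ≤ g j z := fun j z => mul_nonneg (hj_pos j _ _).le (hP_nonneg _)
  have hκ_prob : ∀ (j : Fin J) (i : Fin (nvec j)),
      IsProbabilityMeasure (Measure.map (Z j i) μΩ) :=
    fun j i => Measure.isProbabilityMeasure_map (hZ_meas j i).aemeasurable
  have hg_int : ∀ j : Fin J, 0 < nvec j → Integrable (g j) (μ.prod ν) := by
    intro j hj0
    have h1 : ((μ.prod ν).withDensity fun z => ENNReal.ofReal (hj j z.1 z.2 * Pd z.1))
        Set.univ = 1 := by
      rw [← hlaw j ⟨0, hj0⟩]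
      haveI := hκ_prob j ⟨0, hj0⟩
      exact measure_univ
    rw [withDensity_apply _ MeasurableSet.univ, Measure.restrict_univ] at h1
    refine ⟨(hg_meas j).aestronglyMeasurable, ?_⟩
    have h2 : ∫⁻ z, ‖g j z‖ₑ ∂(μ.prod ν) = 1 := by
      rw [← h1]
      apply lintegral_congr
      intro z
      rw [Real.enorm_eq_ofReal (hg_nonneg j z)]
    show (∫⁻ z, ‖g j z‖ₑ ∂(μ.prod ν)) < ⊤
    rw [h2]
    exact ENNReal.one_lt_top
  -- conversion from the law to product integrals
  have hconv : ∀ (j : Fin J) (i : Fin (nvec j)) (F : X × Y → ℝ), Measurable F →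
      ∫ z, F z ∂(Measure.map (Z j i) μΩ) = ∫ z, g j z * F z ∂(μ.prod ν) := by
    intro j i F hF
    rw [hlaw j i]
    rw [show ((μ.prod ν).withDensity fun z => ENNReal.ofReal (hj j z.1 z.2 * Pd z.1))
        = (μ.prod ν).withDensity
            fun z => (((fun z : X × Y => (hj j z.1 z.2 * Pd z.1).toNNReal) z : ℝ≥0) : ℝ≥0∞)
      from rfl]
    have hPd1 : Measurable fun z : X × Y => Pd z.1 := hP_meas.comp measurable_fst
    rw [integral_withDensity_eq_integral_smul (show Measurable fun z : X × Y => (hj j z.1 z.2 * Pd z.1).toNNReal from ((hj_meas j).mul hPd1).real_toNNReal) F]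
    refine integral_congr_ae (Filter.Eventually.of_forall fun z => ?_)
    simp only [hgdef, NNReal.smul_def,
      Real.coe_toNNReal _ (mul_nonneg (hj_pos j z.1 z.2).le (hP_nonneg z.1)), smul_eq_mul]
  have hmapint : ∀ (j : Fin J) (i : Fin (nvec j)) (F : X × Y → ℝ), Measurable F →
      ∫ ω, F (Z j i ω) ∂μΩ = ∫ z, F z ∂(Measure.map (Z j i) μΩ) :=
    fun j i F hF => (integral_map (hZ_meas j i).aemeasurable hF.aestronglyMeasurable).symm
  -- means and second moments
  set mj : Fin J → ℝ := fun j => ∫ z, g j z * W z ∂(μ.prod ν) with hmjdef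
  set vj : Fin J → ℝ := fun j => ∫ z, g j z * (W z)^2 ∂(μ.prod ν) with hvjdef
  have hmj_eq : ∀ (j : Fin J) (i : Fin (nvec j)),
      mj j = ∫ z, W z ∂(Measure.map (Z j i) μΩ) := by
    intro j i
    rw [hconv j i W hW_meas]
  have hvj_eq : ∀ (j : Fin J) (i : Fin (nvec j)),
      vj j = ∫ z, (W z)^2 ∂(Measure.map (Z j i) μΩ) := by
    intro j i
    rw [hconv j i (fun z => (W z)^2) (hW_meas.pow_const 2)]
  have hmjb : ∀ (j : Fin J) (i : Fin (nvec j)), mj j ≤ b := by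
    intro j i
    haveI := hκ_prob j i
    rw [hmj_eq j i]
    calc ∫ z, W z ∂(Measure.map (Z j i) μΩ)
        ≤ ∫ _, b ∂(Measure.map (Z j i) μΩ) :=
          integral_mono (integrable_of_bdd hW_meas.aestronglyMeasurable hWnorm)
            (integrable_const b) fun z => (hWb z).2
      _ = b := by simp
  -- pointwise sum identity
  have hsum_g : ∀ z : X × Y, ∑ j, (nvec j : ℝ) * g j z = n * (havg z.1 z.2 * Pd z.1) := by
    intro z
    have h1 : ∑ j, (nvec j : ℝ) * hj j z.1 z.2 = havg z.1 z.2 * n := by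
      rw [havg_def z.1 z.2]
      exact (div_mul_cancel₀ _ hn'.ne').symm
    calc ∑ j, (nvec j : ℝ) * g j z = (∑ j, (nvec j : ℝ) * hj j z.1 z.2) * Pd z.1 := by
          rw [Finset.sum_mul]
          exact Finset.sum_congr rfl fun j _ => by simp only [hgdef]; ring
      _ = n * (havg z.1 z.2 * Pd z.1) := by rw [h1]; ring
  -- summation exchange
  have hswap : ∀ (Q : X × Y → ℝ) (C : ℝ), Measurable Q → (∀ z, ‖Q z‖ ≤ C) →
      ∑ j, (nvec j : ℝ) * ∫ z, g j z * Q z ∂(μ.prod ν)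
        = ∫ z, n * (havg z.1 z.2 * Pd z.1 * Q z) ∂(μ.prod ν) := by
    intro Q C hQm hQb
    have hint : ∀ j : Fin J, Integrable (fun z => (nvec j : ℝ) * (g j z * Q z)) (μ.prod ν) := by
      intro j
      rcases Nat.eq_zero_or_pos (nvec j) with h0 | h0
      · rw [show (fun z => (nvec j : ℝ) * (g j z * Q z)) = fun _ => (0:ℝ) from
          funext fun z => by rw [h0]; simp]
        exact integrable_zero _ _ _
      · have h1 : Integrable (fun z => Q z * g j z) (μ.prod ν) :=
          (hg_int j h0).bdd_mul hQm.aestronglyMeasurable (Filter.Eventually.of_forall hQb)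
        exact (h1.congr (Filter.Eventually.of_forall fun z => mul_comm _ _)).const_mul _
    calc ∑ j, (nvec j : ℝ) * ∫ z, g j z * Q z ∂(μ.prod ν)
        = ∑ j, ∫ z, (nvec j : ℝ) * (g j z * Q z) ∂(μ.prod ν) := by
          exact Finset.sum_congr rfl fun j _ => (MeasureTheory.integral_const_mul _ _).symm
      _ = ∫ z, ∑ j, (nvec j : ℝ) * (g j z * Q z) ∂(μ.prod ν) :=
          (integral_finset_sum Finset.univ fun j _ => hint j).symm
      _ = ∫ z, n * (havg z.1 z.2 * Pd z.1 * Q z) ∂(μ.prod ν) := by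
          refine integral_congr_ae (Filter.Eventually.of_forall fun z => ?_)
          calc ∑ j, (nvec j : ℝ) * (g j z * Q z)
              = (∑ j, (nvec j : ℝ) * g j z) * Q z := by
                rw [Finset.sum_mul]
                exact Finset.sum_congr rfl fun j _ => by ring
            _ = n * (havg z.1 z.2 * Pd z.1 * Q z) := by rw [hsum_g z]; ring
  -- sum of means
  have hsum_m : ∑ j, (nvec j : ℝ) * mj j = n * R := by
    simp only [hmjdef]
    rw [hswap W b hW_meas hWnorm, hRdef, ← MeasureTheory.integral_const_mul]
    refine integral_congr_ae (Filter.Eventually.of_forall fun z => ?_)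
    have hz := (havg_pos z.1 z.2).ne'
    simp only [hWdef]
    field_simp
  -- sum of second moments
  set V : ℝ := n * (L^2 * d2) with hVdef
  have hV : 0 < V := by rw [hVdef]; exact mul_pos hn' (mul_pos (pow_pos hL 2) hd2)
  clear_value V
  have hsum_v : ∑ j, (nvec j : ℝ) * vj j ≤ V := by
    simp only [hvjdef]
    rw [hswap (fun z => (W z)^2) (b^2) (hW_meas.pow_const 2)
      (fun z => by
        rw [Real.norm_eq_abs, abs_of_nonneg (sq_nonneg _)]
        exact pow_le_pow_left₀ (hWb z).1 (hWb z).2 2)]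
    have hle : ∀ z : X × Y, n * (havg z.1 z.2 * Pd z.1 * (W z)^2)
        ≤ (n * L^2) * ((h z.1 z.2) ^ 2 / havg z.1 z.2 * Pd z.1) := by
      intro z
      have hz := havg_pos z.1 z.2
      have hδ2 : (δ z)^2 ≤ L^2 := by nlinarith [(hδ z).1, (hδ z).2]
      have e1 : havg z.1 z.2 * Pd z.1 * (W z)^2
          = ((h z.1 z.2) ^ 2 / havg z.1 z.2 * Pd z.1) * (δ z)^2 := by
        simp only [hWdef]
        field_simp
      have hnn : 0 ≤ (h z.1 z.2) ^ 2 / havg z.1 z.2 * Pd z.1 :=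
        mul_nonneg (div_nonneg (sq_nonneg _) hz.le) (hP_nonneg _)
      calc n * (havg z.1 z.2 * Pd z.1 * (W z)^2)
          = n * (((h z.1 z.2) ^ 2 / havg z.1 z.2 * Pd z.1) * (δ z)^2) := by rw [e1]
        _ ≤ n * (((h z.1 z.2) ^ 2 / havg z.1 z.2 * Pd z.1) * L^2) :=
            mul_le_mul_of_nonneg_left (mul_le_mul_of_nonneg_left hδ2 hnn) hn'.le
        _ = (n * L^2) * ((h z.1 z.2) ^ 2 / havg z.1 z.2 * Pd z.1) := by ring
    calc ∫ z, n * (havg z.1 z.2 * Pd z.1 * (W z)^2) ∂(μ.prod ν)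
        ≤ ∫ z, (n * L^2) * ((h z.1 z.2) ^ 2 / havg z.1 z.2 * Pd z.1) ∂(μ.prod ν) :=
          integral_mono_of_nonneg
            (Filter.Eventually.of_forall fun z =>
              mul_nonneg hn'.le (mul_nonneg
                (mul_nonneg (havg_pos z.1 z.2).le (hP_nonneg _)) (sq_nonneg _)))
            (hd2_int.const_mul _)
            (Filter.Eventually.of_forall hle)
      _ = V := by
          rw [MeasureTheory.integral_const_mul, ← hd2def, hVdef]
          ring
  have hvj0 : ∀ j, 0 ≤ vj j := fun j =>
    integral_nonneg fun z => mul_nonneg (hg_nonneg j z) (sq_nonneg _)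
  -- constants
  set t : ℝ := Real.sqrt (2*V*s) + 2*b*s/3 with htdef
  have ht : 0 < t := by
    rw [htdef]
    have h1 : 0 < 2*b*s/3 := by
      have := mul_pos hb0 hs
      linarith
    linarith [Real.sqrt_nonneg (2*V*s)]
  clear_value t
  set A : ℝ := V + b*t/3 with hAdef
  have hA : 0 < A := by
    rw [hAdef]
    have := mul_pos hb0 ht
    linarith [hV]
  clear_value A
  set lam : ℝ := t / A with hlamdef
  have hlam0 : 0 < lam := by rw [hlamdef]; exact div_pos ht hA
  clear_value lam
  have hlb : lam * b < 3 := by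
    have h1 : lam * b = t*b/A := by rw [hlamdef]; ring
    have h2 : 3 * A = 3*V + b*t := by rw [hAdef]; ring
    rw [h1, div_lt_iff₀ hA, h2]
    linarith [hV]
  have hden : 0 < 1 - lam*b/3 := by linarith
  have h1mlb : 1 - lam*b/3 = V/A := by
    have h1 : lam*b/3 = (b*t/3)/A := by rw [hlamdef]; ring
    rw [h1, eq_div_iff hA.ne', sub_mul, one_mul, div_mul_cancel₀ _ hA.ne', hAdef]
    ring
  -- the random variables
  set Xp : ((j : Fin J) × Fin (nvec j)) → Ω → ℝ :=
    fun p ω => mj p.1 - W (Z p.1 p.2 ω) with hXpdef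
  have hXp_meas : ∀ p, Measurable (Xp p) :=
    fun p => measurable_const.sub (hW_meas.comp (hZ_meas p.1 p.2))
  have hXp_indep : iIndepFun Xp μΩ :=
    hind.comp (fun p (z : X × Y) => mj p.1 - W z) (fun p => measurable_const.sub hW_meas)
  -- per-variable mgf bound
  have hmgf_p : ∀ p : (j : Fin J) × Fin (nvec j),
      mgf (Xp p) μΩ lam ≤ Real.exp (lam^2 * vj p.1 * (1/(2*(1 - lam*b/3)))) := by
    intro p
    haveI := hκ_prob p.1 p.2
    have h1 : mgf (Xp p) μΩ lam
        = ∫ z, Real.exp (lam * (mj p.1 - W z)) ∂(Measure.map (Z p.1 p.2) μΩ) := by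
      rw [integral_map (hZ_meas p.1 p.2).aemeasurable
        (show Measurable fun z : X × Y => Real.exp (lam * (mj p.1 - W z)) from
          ((measurable_const.sub hW_meas).const_mul lam).exp).aestronglyMeasurable]
      rfl
    rw [h1]
    have h2 := bern_mgf (Measure.map (Z p.1 p.2) μΩ) W hW_meas b lam (mj p.1)
      hWb (hmj_eq p.1 p.2) hlam0.le hb0.le hlb
    rwa [← hvj_eq p.1 p.2] at h2
  -- sigma sums
  have hsigma_sum : ∀ f : Fin J → ℝ,
      ∑ p : (j : Fin J) × Fin (nvec j), f p.1 = ∑ j, (nvec j : ℝ) * f j := by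
    intro f
    have h1 : ∑ p : (j : Fin J) × Fin (nvec j), f p.1
        = ∑ j, ∑ _i : Fin (nvec j), f j := by
      rw [← Finset.univ_sigma_univ, Finset.sum_sigma]
    rw [h1]
    refine Finset.sum_congr rfl fun j _ => ?_
    rw [Finset.sum_const, Finset.card_univ, Fintype.card_fin, nsmul_eq_mul]
  -- mgf of the sum
  set SX : Ω → ℝ := ∑ p, Xp p with hSXdef
  have hSX_apply : ∀ ω, SX ω = ∑ p : (j : Fin J) × Fin (nvec j), Xp p ω := by
    intro ω
    rw [hSXdef]
    exact Finset.sum_apply ω Finset.univ Xp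
  have hSX_meas : Measurable SX := by
    rw [show SX = fun ω => ∑ p : (j : Fin J) × Fin (nvec j), Xp p ω from funext hSX_apply]
    exact Finset.measurable_sum _ fun p _ => hXp_meas p
  have hmgf_le : mgf SX μΩ lam ≤ Real.exp (lam^2 * V * (1/(2*(1 - lam*b/3)))) := by
    rw [hSXdef, hXp_indep.mgf_sum hXp_meas]
    have hGpos : (0:ℝ) ≤ 1/(2*(1 - lam*b/3)) := le_of_lt (div_pos one_pos (by linarith))
    calc ∏ p, mgf (Xp p) μΩ lam
        ≤ ∏ p : (j : Fin J) × Fin (nvec j),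
            Real.exp (lam^2 * vj p.1 * (1/(2*(1 - lam*b/3)))) :=
          Finset.prod_le_prod (fun p _ => mgf_nonneg) (fun p _ => hmgf_p p)
      _ = Real.exp (∑ p : (j : Fin J) × Fin (nvec j),
            lam^2 * vj p.1 * (1/(2*(1 - lam*b/3)))) := (Real.exp_sum _ _).symm
      _ ≤ Real.exp (lam^2 * V * (1/(2*(1 - lam*b/3)))) := by
          apply Real.exp_le_exp.2
          have e1 : ∑ p : (j : Fin J) × Fin (nvec j),
              lam^2 * vj p.1 * (1/(2*(1 - lam*b/3)))
              = lam^2 * (∑ p : (j : Fin J) × Fin (nvec j), vj p.1) * (1/(2*(1 - lam*b/3))) := by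
            rw [Finset.mul_sum, Finset.sum_mul]
          rw [e1, hsigma_sum vj]
          exact mul_le_mul_of_nonneg_right
            (mul_le_mul_of_nonneg_left hsum_v (sq_nonneg lam)) hGpos
  -- Chernoff
  have hint_exp : Integrable (fun ω => Real.exp (lam * SX ω)) μΩ := by
    apply integrable_of_bdd ((hSX_meas.const_mul lam).exp).aestronglyMeasurable
      (C := Real.exp (lam * ((Fintype.card ((j : Fin J) × Fin (nvec j)) : ℝ) * b)))
    intro ω
    rw [Real.norm_eq_abs, abs_of_pos (Real.exp_pos _)]
    apply Real.exp_le_exp.2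
    apply mul_le_mul_of_nonneg_left _ hlam0.le
    rw [hSX_apply ω]
    calc ∑ p : (j : Fin J) × Fin (nvec j), Xp p ω
        ≤ ∑ _p : (j : Fin J) × Fin (nvec j), b :=
          Finset.sum_le_sum fun p _ => by
            have h1 := (hWb (Z p.1 p.2 ω)).1
            have h2 := hmjb p.1 p.2
            simp only [hXpdef]
            linarith
      _ = (Fintype.card ((j : Fin J) × Fin (nvec j)) : ℝ) * b := by
          rw [Finset.sum_const, Finset.card_univ, nsmul_eq_mul]
  have hchern := measure_ge_le_exp_mul_mgf (μ := μΩ) (X := SX) (t := lam) t hlam0.le hint_exp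
  -- arithmetic
  have harith : -lam*t + lam^2 * V * (1/(2*(1 - lam*b/3))) ≤ -s := by
    rw [h1mlb]
    have hA0 := hA.ne'
    have hV0 := hV.ne'
    have hE : -lam*t + lam^2 * V * (1/(2*(V/A))) = -(t^2/(2*A)) := by
      rw [hlamdef]
      field_simp
      ring
    rw [hE]
    have hts : s * (2*A) ≤ t^2 := by
      have hsq : Real.sqrt (2*V*s)^2 = 2*V*s :=
        Real.sq_sqrt (mul_nonneg (mul_nonneg (by norm_num) hV.le) hs.le)
      rw [hAdef, htdef]
      nlinarith [Real.sqrt_nonneg (2*V*s),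
        mul_nonneg (mul_nonneg hb0.le hs.le) (Real.sqrt_nonneg (2*V*s))]
    have h4 : s ≤ t^2/(2*A) := by rw [le_div_iff₀ (by linarith : (0:ℝ) < 2*A)]; exact hts
    linarith
  have hexp_le : Real.exp (-lam*t) * mgf SX μΩ lam ≤ η := by
    calc Real.exp (-lam*t) * mgf SX μΩ lam
        ≤ Real.exp (-lam*t) * Real.exp (lam^2 * V * (1/(2*(1 - lam*b/3)))) :=
          mul_le_mul_of_nonneg_left hmgf_le (Real.exp_pos _).le
      _ = Real.exp (-lam*t + lam^2 * V * (1/(2*(1 - lam*b/3)))) := (Real.exp_add _ _).symm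
      _ ≤ Real.exp (-s) := Real.exp_le_exp.2 harith
      _ = η := by rw [hsdef, one_div, Real.log_inv, neg_neg, Real.exp_log hη]
  have hP1 : μΩ {ω | t ≤ SX ω} ≤ ENNReal.ofReal η :=
    (ENNReal.le_ofReal_iff_toReal_le (measure_ne_top _ _) hη.le).2
      (le_trans hchern hexp_le)
  -- set inclusion
  have hkey : ∀ ω, SX ω < t →
      R ≤ (1/n) * (∑ j, ∑ i, h (Z j i ω).1 (Z j i ω).2 /
            havg (Z j i ω).1 (Z j i ω).2 * δ (Z j i ω))
        + 2 * L * Mavg * s / (3 * n) + L * Real.sqrt (2 * d2 * s / n) := by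
    intro ω hω
    set Semp : ℝ := ∑ j, ∑ i, h (Z j i ω).1 (Z j i ω).2 /
      havg (Z j i ω).1 (Z j i ω).2 * δ (Z j i ω) with hSemp
    have hSX_eq : SX ω = n * R - Semp := by
      rw [hSX_apply ω]
      have e1 : ∀ p : (j : Fin J) × Fin (nvec j), Xp p ω = mj p.1 - W (Z p.1 p.2 ω) :=
        fun p => rfl
      calc ∑ p : (j : Fin J) × Fin (nvec j), Xp p ω
          = (∑ p : (j : Fin J) × Fin (nvec j), mj p.1)
            - ∑ p : (j : Fin J) × Fin (nvec j), W (Z p.1 p.2 ω) := by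
            rw [← Finset.sum_sub_distrib]
        _ = n * R - Semp := by
            congr 1
            · rw [hsigma_sum mj, hsum_m]
            · rw [← Finset.univ_sigma_univ, Finset.sum_sigma, hSemp]
    have hsqrt : Real.sqrt (2*V*s) / n = L * Real.sqrt (2 * d2 * s / n) := by
      have e : 2*V*s = (L*n)^2 * (2 * d2 * s / n) := by
        rw [hVdef]
        field_simp
      rw [e, Real.sqrt_mul (sq_nonneg (L*n)), Real.sqrt_sq (mul_nonneg hL0 hn'.le)]
      field_simp
    have h2 : n * R < Semp + t := by rw [hSX_eq] at hω; linarith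
    calc R ≤ (Semp + t)/n := by rw [le_div_iff₀ hn']; nlinarith
      _ = (1/n) * Semp + 2 * L * Mavg * s / (3 * n) + Real.sqrt (2*V*s) / n := by
          rw [htdef, hbdef]
          field_simp
          ring
      _ = (1/n) * Semp + 2 * L * Mavg * s / (3 * n) + L * Real.sqrt (2 * d2 * s / n) := by
          rw [hsqrt]
  -- finish
  have hmeas_set : MeasurableSet {ω | t ≤ SX ω} := measurableSet_le measurable_const hSX_meas
  calc ENNReal.ofReal (1 - η) = 1 - ENNReal.ofReal η := by
        rw [ENNReal.ofReal_sub 1 hη.le, ENNReal.ofReal_one]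
    _ ≤ 1 - μΩ {ω | t ≤ SX ω} := tsub_le_tsub_left hP1 1
    _ = μΩ {ω | t ≤ SX ω}ᶜ := (prob_compl_eq_one_sub hmeas_set).symm
    _ ≤ _ := measure_mono fun ω hω => hkey ω (not_le.1 hω)
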